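/- Let m = 2t with t ≥ 3, let E_1,…,E_{2^t+1} be a partial spread of t-dimensional subspaces of F_2^m, let A, B be subsets of indices with |A| = |B| = s, |A ∩ B| = 1, and 2 ≤ s ≤ 2^{t−1} − 1. Define f = Σ_{i∈A} f_i and g = Σ_{i∈B} f_i (f_i the mod-2 indicator of E_i\{0}). Then the code C_{f,g} = {(u f(x) + r g(x) + v·x)_{x∈F_2^m\{0}} : u,r ∈ F_2, v ∈ F_2^m} is a [2^m − 1, m+2] binary linear code in which every nonzero codeword has Hamming weight in the set {s(2^t−1), (2s−2)(2^t−1), 2^{m−1}, 2^{m−1}−s, 2^{m−1}−(2s−2), 2^{m−1}+2^t−s, 2^{m−1}+2^t−(2s−2)}. -/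

import Mathlib

set_option maxHeartbeats 1000000


open Finset
open scoped Classical

noncomputable section

/-- Standard inner product on `F_2^m`. -/
def ip {m : ℕ} (w x : Fin m → ZMod 2) : ZMod 2 := ∑ i, w i * x i

/-- The code `C_{f,g}`, a set of vectors indexed by the nonzero elements of `F_2^m`. -/
def codeFG {m : ℕ} (f g : (Fin m → ZMod 2) → ZMod 2) :
    Set ({x : Fin m → ZMod 2 // x ≠ 0} → ZMod 2) :=
  {c | ∃ u r : ZMod 2, ∃ v : Fin m → ZMod 2,
    c = fun x => u * f x.1 + r * g x.1 + ip v x.1}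

/-- Hamming weight of a codeword. -/
def cwt {m : ℕ} (c : {x : Fin m → ZMod 2 // x ≠ 0} → ZMod 2) : ℕ :=
  (Finset.univ.filter (fun x => c x ≠ 0)).card


lemma zmod2_cases : ∀ a : ZMod 2, a = 0 ∨ a = 1 := by decide

lemma ip_add {m : ℕ} (v x y : Fin m → ZMod 2) : ip v (x + y) = ip v x + ip v y := by
  simp [ip, mul_add, Finset.sum_add_distrib]

lemma ip_single {m : ℕ} (v : Fin m → ZMod 2) (j : Fin m) :
    ip v (Pi.single j 1) = v j := by
  simp [ip, Pi.single_apply, mul_ite]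

lemma ip_zero {m : ℕ} (x : Fin m → ZMod 2) : ip 0 x = 0 := by simp [ip]

-- card of a submodule as a filter
lemma card_filter_mem {m : ℕ} (W : Submodule (ZMod 2) (Fin m → ZMod 2)) :
    (univ.filter (fun x => x ∈ W)).card = 2 ^ (Module.finrank (ZMod 2) W) := by
  have h1 : (univ.filter (fun x => x ∈ W)).card = Fintype.card W := by
    rw [Fintype.card_subtype]
  rw [h1, Module.card_eq_pow_finrank (K := ZMod 2) (V := W)]
  simp [ZMod.card]

lemma add_add_self {m : ℕ} (x y : Fin m → ZMod 2) : x + y + y = x := by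
  funext i
  have : ∀ a b : ZMod 2, a + b + b = a := by decide
  simpa using this (x i) (y i)

lemma half_card {m : ℕ} (W : Submodule (ZMod 2) (Fin m → ZMod 2)) (d : ℕ)
    (hd : Module.finrank (ZMod 2) W = d) (v : Fin m → ZMod 2)
    (hnz : ∃ x ∈ W, ip v x ≠ 0) :
    (univ.filter fun x => x ∈ W ∧ ip v x = 1).card = 2 ^ (d - 1) ∧
    (univ.filter fun x => x ∈ W ∧ ip v x = 0).card = 2 ^ (d - 1) ∧ 1 ≤ d := by
  obtain ⟨x₀, hx₀W, hx₀⟩ := hnz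
  have hx₀1 : ip v x₀ = 1 := (zmod2_cases _).resolve_left hx₀
  have hbij : (univ.filter fun x => x ∈ W ∧ ip v x = 1).card
      = (univ.filter fun x => x ∈ W ∧ ip v x = 0).card := by
    apply Finset.card_bij' (fun x _ => x + x₀) (fun x _ => x + x₀)
    · intro a ha
      simp only [mem_filter, mem_univ, true_and] at ha ⊢
      exact ⟨W.add_mem ha.1 hx₀W, by rw [ip_add, ha.2, hx₀1]; decide⟩
    · intro a ha
      simp only [mem_filter, mem_univ, true_and] at ha ⊢
      exact ⟨W.add_mem ha.1 hx₀W, by rw [ip_add, ha.2, hx₀1]; decide⟩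
    · intro a _; exact add_add_self a x₀
    · intro a _; exact add_add_self a x₀
  have hsplit : (univ.filter fun x => x ∈ W ∧ ip v x = 1).card
      + (univ.filter fun x => x ∈ W ∧ ip v x = 0).card
      = (univ.filter (fun x => x ∈ W)).card := by
    rw [← Finset.card_union_of_disjoint]
    · congr 1
      ext x
      simp only [mem_union, mem_filter, mem_univ, true_and]
      constructor
      · rintro (⟨h, _⟩ | ⟨h, _⟩) <;> exact h
      · intro h
        rcases zmod2_cases (ip v x) with h0 | h1
        · exact Or.inr ⟨h, h0⟩
        · exact Or.inl ⟨h, h1⟩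
    · rw [Finset.disjoint_filter]
      rintro x _ ⟨_, h1⟩ ⟨_, h0⟩
      rw [h1] at h0; exact one_ne_zero h0
  rw [card_filter_mem, hd, hbij] at hsplit
  rcases d with _ | d
  · omega
  · have h2 : (univ.filter fun x => x ∈ W ∧ ip v x = 0).card = 2 ^ d := by omega
    simp only [Nat.succ_sub_one]
    exact ⟨hbij.trans h2, h2, by omega⟩

lemma half_card_top {m : ℕ} (v : Fin m → ZMod 2) (hv : v ≠ 0) :
    (univ.filter fun x => ip v x = 1).card = 2 ^ (m - 1) ∧ 1 ≤ m := by
  have hnz : ∃ x ∈ (⊤ : Submodule (ZMod 2) (Fin m → ZMod 2)), ip v x ≠ 0 := by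
    have : ∃ j, v j ≠ 0 := by
      by_contra h
      push_neg at h
      exact hv (funext h)
    obtain ⟨j, hj⟩ := this
    exact ⟨Pi.single j 1, Submodule.mem_top, by rwa [ip_single]⟩
  have hfr : Module.finrank (ZMod 2) (⊤ : Submodule (ZMod 2) (Fin m → ZMod 2)) = m := by
    rw [finrank_top]; simp
  obtain ⟨h1, _, hm⟩ := half_card _ m hfr v hnz
  constructor
  · rw [← h1]; congr 1; ext x; simp
  · exact hm

lemma ip_zero_right {m : ℕ} (v : Fin m → ZMod 2) : ip v 0 = 0 := by simp [ip]

section Spread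

variable {t : ℕ} (E : Fin (2 ^ t + 1) → Submodule (ZMod 2) (Fin (2 * t) → ZMod 2))

lemma spread_uniq (hspread : ∀ i j, i ≠ j → E i ⊓ E j = ⊥)
    {x : Fin (2 * t) → ZMod 2} (hx : x ≠ 0) {i j} (hi : x ∈ E i) (hj : x ∈ E j) :
    i = j := by
  by_contra hne
  have : x ∈ E i ⊓ E j := ⟨hi, hj⟩
  rw [hspread i j hne] at this
  exact hx this

lemma dual_uniq (hdim : ∀ i, Module.finrank (ZMod 2) (E i) = t)
    (hspread : ∀ i j, i ≠ j → E i ⊓ E j = ⊥)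
    {v : Fin (2 * t) → ZMod 2} (hv : v ≠ 0) {i j}
    (hi : ∀ x ∈ E i, ip v x = 0) (hj : ∀ x ∈ E j, ip v x = 0) : i = j := by
  by_contra hne
  have hsup : E i ⊔ E j = ⊤ := by
    apply Submodule.eq_top_of_finrank_eq
    have h := Submodule.finrank_sup_add_finrank_inf_eq (E i) (E j)
    rw [hspread i j hne] at h
    simp only [finrank_bot, add_zero, hdim] at h
    rw [h]
    simp [two_mul]
  have hall : ∀ x : Fin (2 * t) → ZMod 2, ip v x = 0 := by
    intro x
    have : x ∈ E i ⊔ E j := by rw [hsup]; exact Submodule.mem_top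
    obtain ⟨a, ha, b, hb, rfl⟩ := Submodule.mem_sup.mp this
    rw [ip_add, hi a ha, hj b hb, add_zero]
  apply hv
  funext k
  have := hall (Pi.single k 1)
  rwa [ip_single] at this

end Spread

section Weight

variable {t : ℕ} (E : Fin (2 ^ t + 1) → Submodule (ZMod 2) (Fin (2 * t) → ZMod 2))

lemma sum_ind_eq (hspread : ∀ i j, i ≠ j → E i ⊓ E j = ⊥) (S : Finset (Fin (2 ^ t + 1))) {x : Fin (2 * t) → ZMod 2} (hx : x ≠ 0) :
    (∑ i ∈ S, if x ∈ E i ∧ x ≠ 0 then (1 : ZMod 2) else 0)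
      = if ∃ i ∈ S, x ∈ E i then 1 else 0 := by
  by_cases h : ∃ i ∈ S, x ∈ E i
  · obtain ⟨i₀, hi₀S, hi₀⟩ := h
    rw [if_pos ⟨i₀, hi₀S, hi₀⟩, Finset.sum_eq_single i₀]
    · rw [if_pos ⟨hi₀, hx⟩]
    · intro j hjS hji
      rw [if_neg]
      rintro ⟨hj, -⟩
      exact hji (spread_uniq E hspread hx hj hi₀)
    · intro h; exact absurd hi₀S h
  · rw [if_neg h, Finset.sum_eq_zero]
    intro i hiS
    rw [if_neg]
    rintro ⟨hi, -⟩
    exact h ⟨i, hiS, hi⟩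

lemma weight_count (hdim : ∀ i, Module.finrank (ZMod 2) (E i) = t)
    (hspread : ∀ i j, i ≠ j → E i ⊓ E j = ⊥) (ht : 1 ≤ t) (S : Finset (Fin (2 ^ t + 1))) (v : Fin (2 * t) → ZMod 2) :
    (v = 0 → (univ.filter (fun x : Fin (2 * t) → ZMod 2 => x ≠ 0 ∧
        ((∑ i ∈ S, if x ∈ E i ∧ x ≠ 0 then (1 : ZMod 2) else 0) + ip v x) ≠ 0)).card
        = S.card * (2 ^ t - 1)) ∧
    (v ≠ 0 → ∃ c0 : ℕ, c0 ≤ 1 ∧ c0 ≤ S.card ∧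
      ((univ.filter (fun x : Fin (2 * t) → ZMod 2 => x ≠ 0 ∧
        ((∑ i ∈ S, if x ∈ E i ∧ x ≠ 0 then (1 : ZMod 2) else 0) + ip v x) ≠ 0)).card : ℤ)
        = c0 * ((2:ℤ) ^ t - 1) + ((S.card : ℤ) - c0) * ((2:ℤ) ^ (t-1) - 1)
          + (2:ℤ) ^ (2*t-1) - ((S.card : ℤ) - c0) * (2:ℤ) ^ (t-1)) := by
  set F : (Fin (2 * t) → ZMod 2) → ZMod 2 :=
    fun x => (∑ i ∈ S, if x ∈ E i ∧ x ≠ 0 then (1 : ZMod 2) else 0) + ip v x with hF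
  -- split the support
  have hsplit : (univ.filter (fun x => x ≠ 0 ∧ F x ≠ 0))
      = (univ.filter (fun x : Fin (2 * t) → ZMod 2 =>
          x ≠ 0 ∧ (∃ i ∈ S, x ∈ E i) ∧ ip v x = 0))
        ∪ (univ.filter (fun x : Fin (2 * t) → ZMod 2 =>
          (∀ i ∈ S, x ∉ E i) ∧ ip v x = 1)) := by
    ext x
    simp only [mem_union, mem_filter, mem_univ, true_and]
    by_cases hx : x = 0
    · subst hx
      simp [hF, ip_zero_right]
    · rw [hF]
      simp only [sum_ind_eq E hspread S hx]
      by_cases hU : ∃ i ∈ S, x ∈ E i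
      · rw [if_pos hU]
        have : ∀ a : ZMod 2, (1 + a ≠ 0) ↔ a = 0 := by decide
        simp only [this]
        constructor
        · rintro ⟨-, h⟩; exact Or.inl ⟨hx, hU, h⟩
        · rintro (⟨-, -, h⟩ | ⟨h, -⟩)
          · exact ⟨hx, h⟩
          · obtain ⟨i, hiS, hi⟩ := hU
            exact absurd hi (h i hiS)
      · rw [if_neg hU, zero_add]
        push_neg at hU
        have : ∀ a : ZMod 2, (a ≠ 0) ↔ a = 1 := by decide
        simp only [this]
        constructor
        · rintro ⟨-, h⟩; exact Or.inr ⟨hU, h⟩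
        · rintro (⟨-, h, -⟩ | ⟨-, h⟩)
          · obtain ⟨i, hiS, hi⟩ := h; exact absurd hi (hU i hiS)
          · exact ⟨hx, h⟩
  have hdisj : Disjoint
      (univ.filter (fun x : Fin (2 * t) → ZMod 2 =>
          x ≠ 0 ∧ (∃ i ∈ S, x ∈ E i) ∧ ip v x = 0))
      (univ.filter (fun x : Fin (2 * t) → ZMod 2 =>
          (∀ i ∈ S, x ∉ E i) ∧ ip v x = 1)) := by
    rw [Finset.disjoint_filter]
    rintro x _ ⟨-, ⟨i, hiS, hi⟩, -⟩ ⟨h, -⟩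
    exact h i hiS hi
  have hcard : (univ.filter (fun x => x ≠ 0 ∧ F x ≠ 0)).card
      = (univ.filter (fun x : Fin (2 * t) → ZMod 2 =>
          x ≠ 0 ∧ (∃ i ∈ S, x ∈ E i) ∧ ip v x = 0)).card
        + (univ.filter (fun x : Fin (2 * t) → ZMod 2 =>
          (∀ i ∈ S, x ∉ E i) ∧ ip v x = 1)).card := by
    rw [hsplit, Finset.card_union_of_disjoint hdisj]
  -- Part 1 as a biUnion
  have hP1 : (univ.filter (fun x : Fin (2 * t) → ZMod 2 =>
          x ≠ 0 ∧ (∃ i ∈ S, x ∈ E i) ∧ ip v x = 0))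
      = S.biUnion (fun i => univ.filter (fun x => x ∈ E i ∧ x ≠ 0 ∧ ip v x = 0)) := by
    ext x
    simp only [mem_biUnion, mem_filter, mem_univ, true_and]
    tauto
  have hP1card : (univ.filter (fun x : Fin (2 * t) → ZMod 2 =>
          x ≠ 0 ∧ (∃ i ∈ S, x ∈ E i) ∧ ip v x = 0)).card
      = ∑ i ∈ S, (univ.filter (fun x => x ∈ E i ∧ x ≠ 0 ∧ ip v x = 0)).card := by
    rw [hP1, Finset.card_biUnion]
    intro i hi j hj hij
    rw [Function.onFun, Finset.disjoint_filter]
    rintro x _ ⟨hxi, hx0, -⟩ ⟨hxj, -, -⟩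
    exact hij (spread_uniq E hspread hx0 hxi hxj)
  -- erase-zero trick
  have hci : ∀ i : Fin (2 ^ t + 1), (univ.filter (fun x => x ∈ E i ∧ x ≠ 0 ∧ ip v x = 0)).card
      = (univ.filter (fun x => x ∈ E i ∧ ip v x = 0)).card - 1 := by
    intro i
    have herase : (univ.filter (fun x => x ∈ E i ∧ x ≠ 0 ∧ ip v x = 0))
        = (univ.filter (fun x => x ∈ E i ∧ ip v x = 0)).erase 0 := by
      ext x
      simp only [mem_erase, mem_filter, mem_univ, true_and]
      tauto
    rw [herase, Finset.card_erase_of_mem]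
    simp [Submodule.zero_mem, ip_zero_right]
  constructor
  · -- v = 0 case
    rintro rfl
    have hP2 : (univ.filter (fun x : Fin (2 * t) → ZMod 2 =>
        (∀ i ∈ S, x ∉ E i) ∧ ip 0 x = 1)) = ∅ := by
      ext x
      simp only [mem_filter, mem_univ, true_and, Finset.notMem_empty, iff_false, not_and]
      intro _
      rw [ip_zero]
      exact zero_ne_one
    rw [hcard, hP1card, hP2, Finset.card_empty, add_zero]
    have hterm : ∀ i ∈ S, (univ.filter (fun x => x ∈ E i ∧ x ≠ 0 ∧ ip 0 x = 0)).card
        = 2 ^ t - 1 := by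
      intro i _
      rw [hci i]
      have : (univ.filter (fun x => x ∈ E i ∧ ip (0 : Fin (2*t) → ZMod 2) x = 0))
          = univ.filter (fun x => x ∈ E i) := by
        ext x; simp [ip_zero]
      rw [this, card_filter_mem, hdim]
    rw [Finset.sum_congr rfl hterm, Finset.sum_const, smul_eq_mul]
  · -- v ≠ 0 case
    intro hv
    set S0 := S.filter (fun i => ∀ x ∈ E i, ip v x = 0) with hS0
    have hc0le : S0.card ≤ S.card := Finset.card_le_card (Finset.filter_subset _ _)
    refine ⟨S0.card, ?_, hc0le, ?_⟩
    · apply Finset.card_le_one.mpr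
      intro i hi j hj
      rw [hS0, mem_filter] at hi hj
      exact dual_uniq E hdim hspread hv hi.2 hj.2
    -- per-index counts
    have hA1 : ∀ i ∈ S0, (univ.filter (fun x => x ∈ E i ∧ x ≠ 0 ∧ ip v x = 0)).card
        = 2 ^ t - 1 := by
      intro i hi
      rw [hS0, mem_filter] at hi
      rw [hci i]
      have : (univ.filter (fun x => x ∈ E i ∧ ip v x = 0))
          = univ.filter (fun x => x ∈ E i) := by
        ext x
        simp only [mem_filter, mem_univ, true_and, and_iff_left_iff_imp]
        exact hi.2 x
      rw [this, card_filter_mem, hdim]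
    have hB1 : ∀ i ∈ S0, (univ.filter (fun x => x ∈ E i ∧ ip v x = 1)).card = 0 := by
      intro i hi
      rw [hS0, mem_filter] at hi
      rw [Finset.card_eq_zero]
      ext x
      simp only [mem_filter, mem_univ, true_and, Finset.notMem_empty, iff_false, not_and]
      intro hxE
      rw [hi.2 x hxE]
      exact zero_ne_one
    have hnz' : ∀ i ∈ S.filter (fun i => ¬ ∀ x ∈ E i, ip v x = 0),
        ∃ x ∈ E i, ip v x ≠ 0 := by
      intro i hi
      rw [mem_filter] at hi
      push_neg at hi
      exact hi.2
    have hA2 : ∀ i ∈ S.filter (fun i => ¬ ∀ x ∈ E i, ip v x = 0),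
        (univ.filter (fun x => x ∈ E i ∧ x ≠ 0 ∧ ip v x = 0)).card = 2 ^ (t-1) - 1 := by
      intro i hi
      rw [hci i, (half_card (E i) t (hdim i) v (hnz' i hi)).2.1]
    have hB2 : ∀ i ∈ S.filter (fun i => ¬ ∀ x ∈ E i, ip v x = 0),
        (univ.filter (fun x => x ∈ E i ∧ ip v x = 1)).card = 2 ^ (t-1) := by
      intro i hi
      rw [(half_card (E i) t (hdim i) v (hnz' i hi)).1]
    have hksplit : S0.card + (S.filter (fun i => ¬ ∀ x ∈ E i, ip v x = 0)).card = S.card :=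
      Finset.card_filter_add_card_filter_not _
    -- P1 total
    have hP1total : (∑ i ∈ S, (univ.filter (fun x => x ∈ E i ∧ x ≠ 0 ∧ ip v x = 0)).card)
        = S0.card * (2 ^ t - 1) + (S.card - S0.card) * (2 ^ (t-1) - 1) := by
      rw [← Finset.sum_filter_add_sum_filter_not S (fun i => ∀ x ∈ E i, ip v x = 0)]
      rw [Finset.sum_congr rfl hA1, Finset.sum_congr rfl hA2,
        Finset.sum_const, Finset.sum_const, smul_eq_mul, smul_eq_mul]
      congr 2
      omega
    -- Part 2
    set T := univ.filter (fun x : Fin (2 * t) → ZMod 2 => ip v x = 1) with hT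
    set U := S.biUnion (fun i => univ.filter (fun x => x ∈ E i ∧ ip v x = 1)) with hU
    have hone_ne : ∀ x : Fin (2 * t) → ZMod 2, ip v x = 1 → x ≠ 0 := by
      intro x h hx0
      rw [hx0, ip_zero_right] at h
      exact zero_ne_one h
    have hUcard : U.card = (S.card - S0.card) * 2 ^ (t-1) := by
      rw [hU, Finset.card_biUnion]
      · rw [← Finset.sum_filter_add_sum_filter_not S (fun i => ∀ x ∈ E i, ip v x = 0)]
        rw [Finset.sum_congr rfl hB1, Finset.sum_congr rfl hB2,
          Finset.sum_const, Finset.sum_const, smul_eq_mul, smul_eq_mul, mul_zero, zero_add]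
        congr 1
        omega
      · intro i _ j _ hij
        rw [Function.onFun, Finset.disjoint_filter]
        rintro x _ ⟨hxi, hx1⟩ ⟨hxj, _⟩
        exact hij (spread_uniq E hspread (hone_ne x hx1) hxi hxj)
    have hsub : U ⊆ T := by
      intro x hx
      rw [hU, Finset.mem_biUnion] at hx
      obtain ⟨i, _, hx⟩ := hx
      rw [mem_filter] at hx
      rw [hT, mem_filter]
      exact ⟨mem_univ x, hx.2.2⟩
    have hP2eq : (univ.filter (fun x : Fin (2 * t) → ZMod 2 =>
        (∀ i ∈ S, x ∉ E i) ∧ ip v x = 1)) = T \ U := by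
      ext x
      simp only [Finset.mem_sdiff, hT, hU, Finset.mem_biUnion, mem_filter, mem_univ,
        true_and, not_exists, not_and]
      tauto
    have hTcard : T.card = 2 ^ (2*t - 1) := (half_card_top v hv).1
    have hUle : U.card ≤ T.card := Finset.card_le_card hsub
    have hP2card : (univ.filter (fun x : Fin (2 * t) → ZMod 2 =>
        (∀ i ∈ S, x ∉ E i) ∧ ip v x = 1)).card = T.card - U.card := by
      rw [hP2eq, Finset.card_sdiff_of_subset hsub]
    rw [hcard, hP1card, hP1total, hP2card, hTcard, hUcard]
    have h1t : (1:ℕ) ≤ 2 ^ t := Nat.one_le_two_pow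
    have h1t' : (1:ℕ) ≤ 2 ^ (t-1) := Nat.one_le_two_pow
    have hUle' : (S.card - S0.card) * 2 ^ (t-1) ≤ 2 ^ (2*t-1) := by
      rw [← hUcard, ← hTcard]
      exact hUle
    push_cast [Nat.cast_sub h1t, Nat.cast_sub h1t', Nat.cast_sub hc0le,
      Nat.cast_sub hUle']
    ring

end Weight

lemma cwt_eq {m : ℕ} (F : (Fin m → ZMod 2) → ZMod 2) :
    cwt (fun x : {x : Fin m → ZMod 2 // x ≠ 0} => F x.1)
      = (univ.filter (fun x : Fin m → ZMod 2 => x ≠ 0 ∧ F x ≠ 0)).card := by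
  rw [cwt, ← Fintype.card_subtype, ← Fintype.card_subtype]
  exact Fintype.card_congr (Equiv.subtypeSubtypeEquivSubtypeInter (fun x : Fin m → ZMod 2 => x ≠ 0) (fun x => F x ≠ 0))

lemma sum_symmdiff {ι : Type*} [DecidableEq ι] (A B : Finset ι) (h : ι → ZMod 2) :
    ∑ i ∈ A, h i + ∑ i ∈ B, h i = ∑ i ∈ (A ∪ B) \ (A ∩ B), h i := by
  have key : ∀ a b : ZMod 2, (b + a) + a = b := by decide
  calc ∑ i ∈ A, h i + ∑ i ∈ B, h i
      = ∑ i ∈ A ∪ B, h i + ∑ i ∈ A ∩ B, h i := (Finset.sum_union_inter).symm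
    _ = (∑ i ∈ (A ∪ B) \ (A ∩ B), h i + ∑ i ∈ A ∩ B, h i) + ∑ i ∈ A ∩ B, h i := by
        rw [Finset.sum_sdiff Finset.inter_subset_union]
    _ = ∑ i ∈ (A ∪ B) \ (A ∩ B), h i := key _ _

lemma pos7 (t : ℕ) (s : ℕ) (ht : 3 ≤ t) (hs2 : 2 ≤ s) (hs : s ≤ 2 ^ (t - 1) - 1) :
    ∀ z ∈ ({(s : ℤ) * (2 ^ t - 1), (2 * (s : ℤ) - 2) * (2 ^ t - 1),
        (2 : ℤ) ^ (2 * t - 1), (2 : ℤ) ^ (2 * t - 1) - s,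
        (2 : ℤ) ^ (2 * t - 1) - (2 * (s : ℤ) - 2), (2 : ℤ) ^ (2 * t - 1) + 2 ^ t - s,
        (2 : ℤ) ^ (2 * t - 1) + 2 ^ t - (2 * (s : ℤ) - 2)} : Set ℤ), 0 < z := by
  have ha4 : (4:ℤ) ≤ 2 ^ (t - 1) := by
    calc (4:ℤ) = 2 ^ 2 := by norm_num
    _ ≤ 2 ^ (t - 1) := pow_le_pow_right₀ (by norm_num) (by omega)
  have hσ : (s : ℤ) ≤ 2 ^ (t - 1) - 1 := by
    have := (Nat.cast_le (α := ℤ)).mpr hs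
    have h1 : (1:ℕ) ≤ 2 ^ (t-1) := Nat.one_le_two_pow
    rw [Nat.cast_sub h1] at this
    push_cast at this
    exact this
  have hσ2 : (2:ℤ) ≤ (s:ℤ) := by exact_mod_cast hs2
  have hta : (2:ℤ) ^ t = 2 * 2 ^ (t - 1) := by
    rw [← pow_succ']
    congr 1
    omega
  have htb : (2:ℤ) ^ (2 * t - 1) = 2 * (2 ^ (t-1) * 2 ^ (t-1)) := by
    rw [← pow_add, ← pow_succ']
    congr 1
    omega
  intro z hz
  simp only [Set.mem_insert_iff, Set.mem_singleton_iff] at hz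
  set a := (2:ℤ) ^ (t-1)
  rcases hz with rfl|rfl|rfl|rfl|rfl|rfl|rfl <;> simp only [hta, htb] <;> nlinarith

lemma codeword_weight (t s : ℕ) (ht : 3 ≤ t) (hs2 : 2 ≤ s) (hs : s ≤ 2 ^ (t - 1) - 1)
    (E : Fin (2 ^ t + 1) → Submodule (ZMod 2) (Fin (2 * t) → ZMod 2))
    (hdim : ∀ i, Module.finrank (ZMod 2) (E i) = t)
    (hspread : ∀ i j, i ≠ j → E i ⊓ E j = ⊥)
    (A B : Finset (Fin (2 ^ t + 1))) (hA : A.card = s) (hB : B.card = s)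
    (hAB : (A ∩ B).card = 1)
    (f g : (Fin (2 * t) → ZMod 2) → ZMod 2)
    (hf : ∀ x, f x = ∑ i ∈ A, (if x ∈ E i ∧ x ≠ 0 then (1 : ZMod 2) else 0))
    (hg : ∀ x, g x = ∑ i ∈ B, (if x ∈ E i ∧ x ≠ 0 then (1 : ZMod 2) else 0))
    (u r : ZMod 2) (v : Fin (2 * t) → ZMod 2) (hurv : ¬(u = 0 ∧ r = 0 ∧ v = 0)) :
    ((cwt (fun x : {x : Fin (2 * t) → ZMod 2 // x ≠ 0} =>
        u * f x.1 + r * g x.1 + ip v x.1)) : ℤ) ∈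
      ({(s : ℤ) * (2 ^ t - 1), (2 * (s : ℤ) - 2) * (2 ^ t - 1),
        (2 : ℤ) ^ (2 * t - 1), (2 : ℤ) ^ (2 * t - 1) - s,
        (2 : ℤ) ^ (2 * t - 1) - (2 * (s : ℤ) - 2), (2 : ℤ) ^ (2 * t - 1) + 2 ^ t - s,
        (2 : ℤ) ^ (2 * t - 1) + 2 ^ t - (2 * (s : ℤ) - 2)} : Set ℤ) := by
  have ht1 : 1 ≤ t := by omega
  have h1t : (1:ℕ) ≤ 2 ^ t := Nat.one_le_two_pow
  -- generic evaluation
  have generic : ∀ (S : Finset (Fin (2 ^ t + 1))),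
      (v = 0 → ((cwt (fun x : {x : Fin (2 * t) → ZMod 2 // x ≠ 0} =>
          (∑ i ∈ S, if x.1 ∈ E i ∧ x.1 ≠ 0 then (1 : ZMod 2) else 0) + ip v x.1)) : ℤ)
          = (S.card : ℤ) * ((2:ℤ) ^ t - 1)) ∧
      (v ≠ 0 → ∃ c0 : ℕ, c0 ≤ 1 ∧ c0 ≤ S.card ∧
        ((cwt (fun x : {x : Fin (2 * t) → ZMod 2 // x ≠ 0} =>
          (∑ i ∈ S, if x.1 ∈ E i ∧ x.1 ≠ 0 then (1 : ZMod 2) else 0) + ip v x.1)) : ℤ)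
          = c0 * ((2:ℤ) ^ t - 1) + ((S.card : ℤ) - c0) * ((2:ℤ) ^ (t-1) - 1)
            + (2:ℤ) ^ (2*t-1) - ((S.card : ℤ) - c0) * (2:ℤ) ^ (t-1)) := by
    intro S
    have hcw : cwt (fun x : {x : Fin (2 * t) → ZMod 2 // x ≠ 0} =>
          (∑ i ∈ S, if x.1 ∈ E i ∧ x.1 ≠ 0 then (1 : ZMod 2) else 0) + ip v x.1)
        = (univ.filter (fun x : Fin (2 * t) → ZMod 2 => x ≠ 0 ∧
          ((∑ i ∈ S, if x ∈ E i ∧ x ≠ 0 then (1 : ZMod 2) else 0) + ip v x) ≠ 0)).card :=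
      cwt_eq (fun y => (∑ i ∈ S, if y ∈ E i ∧ y ≠ 0 then (1 : ZMod 2) else 0) + ip v y)
    obtain ⟨hv0, hvn⟩ := weight_count E hdim hspread ht1 S v
    constructor
    · intro h
      rw [hcw, hv0 h]
      push_cast [Nat.cast_sub h1t]
      ring
    · intro h
      obtain ⟨c0, hc01, hc0S, heq⟩ := hvn h
      exact ⟨c0, hc01, hc0S, by rw [hcw]; exact heq⟩
  have hu := zmod2_cases u
  have hr := zmod2_cases r
  -- helper to rewrite the codeword into generic form
  rcases hu with rfl | rfl <;> rcases hr with rfl | rfl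
  · -- u = 0, r = 0, so v ≠ 0
    have hv : v ≠ 0 := by
      intro h
      exact hurv ⟨rfl, rfl, h⟩
    have hfun : (fun x : {x : Fin (2 * t) → ZMod 2 // x ≠ 0} =>
        (0:ZMod 2) * f x.1 + 0 * g x.1 + ip v x.1)
        = (fun x : {x : Fin (2 * t) → ZMod 2 // x ≠ 0} =>
          (∑ i ∈ (∅ : Finset (Fin (2 ^ t + 1))), if x.1 ∈ E i ∧ x.1 ≠ 0 then (1 : ZMod 2) else 0)
            + ip v x.1) := by
      funext x
      simp
    rw [hfun]
    obtain ⟨c0, hc01, hc0S, heq⟩ := (generic ∅).2 hv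
    simp only [Finset.card_empty, Nat.le_zero] at hc0S
    subst hc0S
    rw [heq]
    right; right; left
    simp only [Finset.card_empty]
    push_cast
    ring
  · -- u = 0, r = 1 : S = B
    have hfun : (fun x : {x : Fin (2 * t) → ZMod 2 // x ≠ 0} =>
        (0:ZMod 2) * f x.1 + 1 * g x.1 + ip v x.1)
        = (fun x : {x : Fin (2 * t) → ZMod 2 // x ≠ 0} =>
          (∑ i ∈ B, if x.1 ∈ E i ∧ x.1 ≠ 0 then (1 : ZMod 2) else 0) + ip v x.1) := by
      funext x
      rw [hg x.1]
      ring
    rw [hfun]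
    by_cases hv : v = 0
    · rw [(generic B).1 hv, hB]
      left; rfl
    · obtain ⟨c0, hc01, hc0S, heq⟩ := (generic B).2 hv
      rw [heq, hB]
      interval_cases c0
      · right; right; right; left
        push_cast
        ring
      · right; right; right; right; right; left
        push_cast
        ring
  · -- u = 1, r = 0 : S = A
    have hfun : (fun x : {x : Fin (2 * t) → ZMod 2 // x ≠ 0} =>
        (1:ZMod 2) * f x.1 + 0 * g x.1 + ip v x.1)
        = (fun x : {x : Fin (2 * t) → ZMod 2 // x ≠ 0} =>
          (∑ i ∈ A, if x.1 ∈ E i ∧ x.1 ≠ 0 then (1 : ZMod 2) else 0) + ip v x.1) := by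
      funext x
      rw [hf x.1]
      ring
    rw [hfun]
    by_cases hv : v = 0
    · rw [(generic A).1 hv, hA]
      left; rfl
    · obtain ⟨c0, hc01, hc0S, heq⟩ := (generic A).2 hv
      rw [heq, hA]
      interval_cases c0
      · right; right; right; left
        push_cast
        ring
      · right; right; right; right; right; left
        push_cast
        ring
  · -- u = 1, r = 1 : S = (A ∪ B) \ (A ∩ B)
    have hsd : ((A ∪ B) \ (A ∩ B)).card = 2 * s - 2 := by
      have h1 := Finset.card_union_add_card_inter A B
      have h2 := Finset.card_sdiff_of_subset (Finset.inter_subset_union (s := A) (t := B))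
      omega
    have hsdZ : ((((A ∪ B) \ (A ∩ B)).card : ℕ) : ℤ) = 2 * (s:ℤ) - 2 := by
      rw [hsd]
      have : (2:ℕ) ≤ 2 * s := by omega
      push_cast [Nat.cast_sub this]
      ring
    have hfun : (fun x : {x : Fin (2 * t) → ZMod 2 // x ≠ 0} =>
        (1:ZMod 2) * f x.1 + 1 * g x.1 + ip v x.1)
        = (fun x : {x : Fin (2 * t) → ZMod 2 // x ≠ 0} =>
          (∑ i ∈ (A ∪ B) \ (A ∩ B), if x.1 ∈ E i ∧ x.1 ≠ 0 then (1 : ZMod 2) else 0)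
            + ip v x.1) := by
      funext x
      rw [hf x.1, hg x.1, one_mul, one_mul, ← sum_symmdiff]
    rw [hfun]
    by_cases hv : v = 0
    · rw [(generic _).1 hv, hsdZ]
      right; left; rfl
    · obtain ⟨c0, hc01, hc0S, heq⟩ := (generic _).2 hv
      rw [heq, hsdZ]
      interval_cases c0
      · right; right; right; right; left
        push_cast
        ring
      · simp only [Set.mem_insert_iff, Set.mem_singleton_iff]
        right; right; right; right; right; right
        push_cast
        ring

theorem stmt_14 (t s : ℕ) (ht : 3 ≤ t) (hs2 : 2 ≤ s) (hs : s ≤ 2 ^ (t - 1) - 1)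
    (E : Fin (2 ^ t + 1) → Submodule (ZMod 2) (Fin (2 * t) → ZMod 2))
    (hdim : ∀ i, Module.finrank (ZMod 2) (E i) = t)
    (hspread : ∀ i j, i ≠ j → E i ⊓ E j = ⊥)
    (A B : Finset (Fin (2 ^ t + 1))) (hA : A.card = s) (hB : B.card = s)
    (hAB : (A ∩ B).card = 1)
    (f g : (Fin (2 * t) → ZMod 2) → ZMod 2)
    (hf : ∀ x, f x = ∑ i ∈ A, (if x ∈ E i ∧ x ≠ 0 then (1 : ZMod 2) else 0))
    (hg : ∀ x, g x = ∑ i ∈ B, (if x ∈ E i ∧ x ≠ 0 then (1 : ZMod 2) else 0)) :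
    Fintype.card {x : Fin (2 * t) → ZMod 2 // x ≠ 0} = 2 ^ (2 * t) - 1 ∧
    Module.finrank (ZMod 2) (Submodule.span (ZMod 2) (codeFG f g)) = 2 * t + 2 ∧
    ∀ c ∈ codeFG f g, c ≠ 0 →
      (cwt c : ℤ) ∈ ({(s : ℤ) * (2 ^ t - 1), (2 * (s : ℤ) - 2) * (2 ^ t - 1),
        (2 : ℤ) ^ (2 * t - 1), (2 : ℤ) ^ (2 * t - 1) - s,
        (2 : ℤ) ^ (2 * t - 1) - (2 * (s : ℤ) - 2), (2 : ℤ) ^ (2 * t - 1) + 2 ^ t - s,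
        (2 : ℤ) ^ (2 * t - 1) + 2 ^ t - (2 * (s : ℤ) - 2)} : Set ℤ) := by
  have hip_addl : ∀ (v w x : Fin (2 * t) → ZMod 2), ip (v + w) x = ip v x + ip w x := by
    intro v w x
    simp [ip, add_mul, Finset.sum_add_distrib]
  have hip_smul : ∀ (c : ZMod 2) (v x : Fin (2 * t) → ZMod 2),
      ip (c • v) x = c * ip v x := by
    intro c v x
    simp [ip, Finset.mul_sum, mul_assoc]
  -- the linear map
  set L : (ZMod 2 × ZMod 2 × (Fin (2 * t) → ZMod 2))
      →ₗ[ZMod 2] ({x : Fin (2 * t) → ZMod 2 // x ≠ 0} → ZMod 2) :=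
    { toFun := fun p => fun x => p.1 * f x.1 + p.2.1 * g x.1 + ip p.2.2 x.1,
      map_add' := by
        intro p q
        funext x
        simp only [Prod.fst_add, Prod.snd_add, Pi.add_apply, hip_addl]
        ring
      map_smul' := by
        intro c p
        funext x
        simp only [Prod.smul_fst, Prod.smul_snd, smul_eq_mul, Pi.smul_apply,
          RingHom.id_apply, hip_smul]
        ring } with hL
  have hrange : codeFG f g = ↑(LinearMap.range L) := by
    ext c
    constructor
    · rintro ⟨u, r, v, rfl⟩
      exact ⟨(u, r, v), rfl⟩
    · rintro ⟨⟨u, r, v⟩, rfl⟩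
      exact ⟨u, r, v, rfl⟩
  have hcwt_zero : ∀ c : {x : Fin (2 * t) → ZMod 2 // x ≠ 0} → ZMod 2,
      cwt c = 0 → c = 0 := by
    intro c hc
    rw [cwt, Finset.card_eq_zero] at hc
    funext x
    by_contra hx
    have : x ∈ univ.filter (fun y => c y ≠ 0) := by
      simp only [mem_filter, mem_univ, true_and]
      exact hx
    rw [hc] at this
    exact absurd this (Finset.notMem_empty x)
  have hpos := pos7 t s ht hs2 hs
  have hinj : Function.Injective L := by
    rw [injective_iff_map_eq_zero]
    rintro ⟨u, r, v⟩ h0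
    by_contra hne
    have hurv : ¬(u = 0 ∧ r = 0 ∧ v = 0) := by
      rintro ⟨rfl, rfl, rfl⟩
      exact hne rfl
    have hmem := codeword_weight t s ht hs2 hs E hdim hspread A B hA hB hAB f g hf hg
      u r v hurv
    have hzero : cwt (fun x : {x : Fin (2 * t) → ZMod 2 // x ≠ 0} =>
        u * f x.1 + r * g x.1 + ip v x.1) = 0 := by
      have : (fun x : {x : Fin (2 * t) → ZMod 2 // x ≠ 0} =>
          u * f x.1 + r * g x.1 + ip v x.1) = 0 := h0
      rw [this]
      simp [cwt]
    rw [hzero] at hmem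
    have := hpos _ hmem
    exact absurd this (by norm_num)
  refine ⟨?_, ?_, ?_⟩
  · -- cardinality
    rw [Fintype.card_subtype_compl, Fintype.card_subtype_eq (0 : Fin (2 * t) → ZMod 2)]
    congr 1
    simp [ZMod.card]
  · -- dimension
    rw [hrange, Submodule.span_eq, LinearMap.finrank_range_of_inj hinj]
    simp only [Module.finrank_prod, Module.finrank_self, Module.finrank_pi]
    simp [Fintype.card_fin]
    omega
  · -- weights
    rintro c ⟨u, r, v, rfl⟩ hc0
    have hurv : ¬(u = 0 ∧ r = 0 ∧ v = 0) := by
      rintro ⟨rfl, rfl, rfl⟩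
      apply hc0
      funext x
      simp [ip_zero]
    exact codeword_weight t s ht hs2 hs E hdim hspread A B hA hB hAB f g hf hg u r v hurv
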